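/- Let K ≥ 3. The image of the map v ↦ (P_cl(y; v))_{y∈[K]} over the set of strictly increasing vectors v ∈ ℝ^{K−1} (v_1 < v_2 < ⋯ < v_{K−1}) equals Δ_{K-1}^∅, the set of probability vectors in the simplex with all coordinates nonzero. Consequently, the cumulative-logits model with learner class {ρ[g] : g : ℝ^d → ℝ^{K−1}} for a function ρ with range (0,∞) has the same representation ability as the SL model with the unrestricted learner class, namely {p : ℝ^d → Δ_{K-1}^∅}. -/

import Mathlib

open scoped BigOperators

noncomputable section

/-- The probability simplex Δ_{K-1} ⊆ ℝ^K. -/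
def simplex (K : ℕ) : Set (Fin K → ℝ) :=
  {p | (∑ k, p k) = 1 ∧ ∀ k, 0 ≤ p k ∧ p k ≤ 1}

/-- A PMF (vector) is unimodal: there is a mode M such that p is
nondecreasing up to M and nonincreasing after M. -/
def Unimodal {K : ℕ} (p : Fin K → ℝ) : Prop :=
  ∃ M : Fin K, (∀ k, p k ≤ p M) ∧
    (∀ i j : Fin K, i ≤ j → j ≤ M → p i ≤ p j) ∧
    (∀ i j : Fin K, M ≤ i → i ≤ j → p j ≤ p i)

/-- Δ̂_{K-1}: the set of unimodal PMFs. -/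
def uniSimplex (K : ℕ) : Set (Fin K → ℝ) :=
  {p | p ∈ simplex K ∧ Unimodal p}

/-- The stereotype logit (SL) link function. -/
def Psl {K : ℕ} (u : Fin K → ℝ) (y : Fin K) : ℝ :=
  Real.exp (-(u y)) / ∑ k, Real.exp (-(u k))

/-- The ordering transform ρ[u]: (ρ[u])_1 = u_1, (ρ[u])_k = (ρ[u])_{k-1} + ρ(u_k). -/
def ordT (ρ : ℝ → ℝ) {K : ℕ} (u : Fin K → ℝ) : Fin K → ℝ :=
  fun k => u ⟨0, k.pos⟩ +
    ∑ j ∈ Finset.univ.filter (fun j : Fin K => 0 < (j : ℕ) ∧ (j : ℕ) ≤ (k : ℕ)), ρ (u j)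

/-- The Euclidean norm on ℝ^K. -/
def euclNorm {K : ℕ} (u : Fin K → ℝ) : ℝ :=
  Real.sqrt (∑ k, (u k) ^ 2)

/-- Euclidean distance from a point to a set. -/
def DH {K : ℕ} (u : Fin K → ℝ) (S : Set (Fin K → ℝ)) : ℝ :=
  sInf ((fun v => euclNorm (u - v)) '' S)

/-- The logistic sigmoid. -/
def sigmoid (t : ℝ) : ℝ := 1 / (1 + Real.exp (-t))

/-- Cumulative probabilities for the CL link: clCum v k = Pr(Y ≤ k). -/
def clCum {K : ℕ} (v : Fin (K - 1) → ℝ) (k : ℕ) : ℝ :=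
  if _h : k = 0 then 0
  else if h2 : k ≤ K - 1 then sigmoid (v ⟨k - 1, by omega⟩) else 1

/-- The cumulative logits (CL) link function:
P_cl(1; v) = σ(v_1), P_cl(K; v) = 1 − σ(v_{K−1}),
P_cl(y; v) = σ(v_y) − σ(v_{y−1}) for 2 ≤ y ≤ K−1. -/
def Pcl {K : ℕ} (v : Fin (K - 1) → ℝ) (y : Fin K) : ℝ :=
  clCum v ((y : ℕ) + 1) - clCum v (y : ℕ)

lemma sigmoid_pos (t : ℝ) : 0 < sigmoid t := by
  unfold sigmoid; positivity

lemma sigmoid_lt_one (t : ℝ) : sigmoid t < 1 := by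
  unfold sigmoid
  rw [div_lt_one (by positivity)]
  linarith [Real.exp_pos (-t)]

lemma sigmoid_strictMono : StrictMono sigmoid := by
  intro a b h
  unfold sigmoid
  apply one_div_lt_one_div_of_lt (by positivity)
  have : Real.exp (-b) < Real.exp (-a) := Real.exp_lt_exp.2 (by linarith)
  linarith

lemma sigmoid_logit {c : ℝ} (h0 : 0 < c) (h1 : c < 1) :
    sigmoid (Real.log (c / (1 - c))) = c := by
  have hc : (0:ℝ) < 1 - c := by linarith
  rw [sigmoid, Real.exp_neg, Real.exp_log (by positivity)]
  field_simp
  ring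

lemma logit_lt {a b : ℝ} (ha : 0 < a) (hb : b < 1) (hab : a < b) :
    Real.log (a / (1 - a)) < Real.log (b / (1 - b)) := by
  have hb0 : 0 < b := ha.trans hab
  have ha1 : a < 1 := hab.trans hb
  apply Real.log_lt_log (by apply div_pos ha; linarith)
  rw [div_lt_div_iff₀ (by linarith) (by linarith)]
  nlinarith

lemma clCum_zero {K : ℕ} (v : Fin (K - 1) → ℝ) : clCum v 0 = 0 := by simp [clCum]

lemma clCum_eq {K : ℕ} (v : Fin (K - 1) → ℝ) {m : ℕ} (h1 : m ≠ 0) (h2 : m ≤ K - 1) :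
    clCum v m = sigmoid (v ⟨m - 1, by omega⟩) := by
  simp [clCum, h1, h2]

lemma clCum_top {K : ℕ} (v : Fin (K - 1) → ℝ) {m : ℕ} (h1 : m ≠ 0) (h2 : K - 1 < m) :
    clCum v m = 1 := by
  unfold clCum
  rw [dif_neg h1, dif_neg (by omega)]

lemma pcl_forward {K : ℕ} (hK : 3 ≤ K) {v : Fin (K - 1) → ℝ} (hv : StrictMono v) :
    (fun y => Pcl v y) ∈ simplex K ∧ ∀ k, Pcl v k ≠ 0 := by
  have hadj : ∀ m, m < K → clCum v m < clCum v (m + 1) := by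
    intro m hm
    by_cases h0 : m = 0
    · subst h0
      have e01 : (0:ℕ) + 1 = 1 := rfl
      rw [e01, clCum_zero, clCum_eq v one_ne_zero (by omega)]
      exact sigmoid_pos _
    by_cases hK1 : m ≤ K - 2
    · rw [clCum_eq v h0 (by omega), clCum_eq v (by omega) (by omega)]
      exact sigmoid_strictMono (hv (Fin.mk_lt_mk.2 (by omega)))
    · have hm1 : m = K - 1 := by omega
      subst hm1
      rw [clCum_eq v (by omega) le_rfl, clCum_top v (by omega) (by omega)]
      exact sigmoid_lt_one _
  have hsum : ∑ y : Fin K, Pcl v y = 1 := by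
    have e : ∑ y : Fin K, Pcl v y
        = ∑ i ∈ Finset.range K, (clCum v (i + 1) - clCum v i) :=
      Fin.sum_univ_eq_sum_range (fun i => clCum v (i + 1) - clCum v i) K
    rw [e, Finset.sum_range_sub (clCum v) K, clCum_zero,
      clCum_top v (by omega) (by omega)]
    ring
  have hpos : ∀ y : Fin K, 0 < Pcl v y := fun y => sub_pos.2 (hadj y y.isLt)
  refine ⟨⟨hsum, fun k => ⟨(hpos k).le, ?_⟩⟩, fun k => (hpos k).ne'⟩
  calc Pcl v k ≤ ∑ y : Fin K, Pcl v y :=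
        Finset.single_le_sum (fun i _ => (hpos i).le) (Finset.mem_univ k)
    _ = 1 := hsum

lemma pcl_surj {K : ℕ} (hK : 3 ≤ K) {p : Fin K → ℝ} (hp : p ∈ simplex K)
    (hne : ∀ k, p k ≠ 0) :
    ∃ v : Fin (K - 1) → ℝ, StrictMono v ∧ (fun y => Pcl v y) = p := by
  set pe : ℕ → ℝ := fun j => if h : j < K then p ⟨j, h⟩ else 0 with hpe_def
  set c : ℕ → ℝ := fun n => ∑ j ∈ Finset.range n, pe j with hc_def
  have hppos : ∀ k, 0 < p k := fun k => lt_of_le_of_ne (hp.2 k).1 (hne k).symm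
  have hpe : ∀ j, j < K → 0 < pe j := by
    intro j hj
    simp only [hpe_def, dif_pos hj]
    exact hppos _
  have hcK : c K = 1 := by
    have e : ∑ j ∈ Finset.range K, pe j = ∑ i : Fin K, pe i :=
      (Fin.sum_univ_eq_sum_range pe K).symm
    simp only [hc_def, e]
    rw [← hp.1]
    refine Finset.sum_congr rfl fun i _ => ?_
    simp [hpe_def, i.isLt]
  have hmono : ∀ a b, a < b → b ≤ K → c a < c b := by
    intro a b hab hbK
    have hsplit : c b = c a + ∑ j ∈ Finset.Ico a b, pe j := by
      simp only [hc_def, Finset.range_eq_Ico]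
      rw [← Finset.sum_Ico_consecutive pe (Nat.zero_le a) hab.le]
    rw [hsplit]
    have : 0 < ∑ j ∈ Finset.Ico a b, pe j := by
      apply Finset.sum_pos
      · intro j hj
        exact hpe j (by have := (Finset.mem_Ico.1 hj).2; omega)
      · exact Finset.nonempty_Ico.2 hab
    linarith
  have hc0 : c 0 = 0 := by simp [hc_def]
  have h0c : ∀ m, 1 ≤ m → m ≤ K → 0 < c m := by
    intro m h1 h2
    have := hmono 0 m (by omega) h2
    rwa [hc0] at this
  have hc1 : ∀ m, m < K → c m < 1 := by
    intro m hm
    have := hmono m K hm le_rfl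
    rwa [hcK] at this
  refine ⟨fun k => Real.log (c (k + 1) / (1 - c (k + 1))), ?_, ?_⟩
  · intro k k' hkk'
    have hk : (k : ℕ) + 1 ≤ K := by have := k.isLt; omega
    have hk' : (k' : ℕ) + 1 ≤ K := by have := k'.isLt; omega
    exact logit_lt (h0c _ (by omega) hk) (hc1 _ (by omega)) (hmono _ _ (by
      have : (k : ℕ) < (k' : ℕ) := hkk'
      omega) hk')
  · have hsig : ∀ m, 1 ≤ m → m ≤ K - 1 →
        sigmoid (Real.log (c m / (1 - c m))) = c m := by
      intro m h1 h2
      exact sigmoid_logit (h0c m h1 (by omega)) (hc1 m (by omega))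
    have hcl : ∀ m, m ≤ K → clCum (fun k : Fin (K-1) =>
        Real.log (c (k + 1) / (1 - c (k + 1)))) m = c m := by
      intro m hm
      by_cases h0 : m = 0
      · subst h0; rw [clCum_zero, hc0]
      by_cases h2 : m ≤ K - 1
      · rw [clCum_eq _ h0 h2]
        have : (m : ℕ) - 1 + 1 = m := by omega
        rw [this] at *
        exact hsig m (by omega) h2
      · have : m = K := by omega
        subst this
        rw [clCum_top _ (by omega) (by omega), hcK]
    funext y
    simp only [Pcl]
    rw [hcl _ (by have := y.isLt; omega), hcl _ (by have := y.isLt; omega)]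
    have : c ((y : ℕ) + 1) = c (y : ℕ) + pe (y : ℕ) := by
      simp [hc_def, Finset.sum_range_succ]
    rw [this]
    simp [hpe_def, y.isLt]

lemma ordT_strictMono {n : ℕ} {ρ : ℝ → ℝ} (hρ : ∀ t, 0 < ρ t) (u : Fin n → ℝ) :
    StrictMono (ordT ρ u) := by
  intro k k' hkk'
  unfold ordT
  have hlt : (k : ℕ) < (k' : ℕ) := hkk'
  have hsum : ∑ j ∈ Finset.univ.filter (fun j : Fin n => 0 < (j : ℕ) ∧ (j : ℕ) ≤ (k : ℕ)), ρ (u j)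
      < ∑ j ∈ Finset.univ.filter (fun j : Fin n => 0 < (j : ℕ) ∧ (j : ℕ) ≤ (k' : ℕ)), ρ (u j) := by
    apply Finset.sum_lt_sum_of_subset
    · intro j hj
      simp only [Finset.mem_filter, Finset.mem_univ, true_and] at *
      exact ⟨hj.1, by omega⟩
    · exact Finset.mem_filter.2 ⟨Finset.mem_univ _, by omega, le_rfl⟩
    · simp only [Finset.mem_filter, Finset.mem_univ, true_and, not_and]
      intro _; omega
    · exact hρ _
    · intro j _ _; exact (hρ _).le
  exact add_lt_add_right hsum _

lemma ordT_surj {n : ℕ} {ρ : ℝ → ℝ} (hρ : Set.range ρ = Set.Ioi (0:ℝ))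
    {v : Fin n → ℝ} (hv : StrictMono v) : ∃ u, ordT ρ u = v := by
  have hinv : ∀ y : ℝ, 0 < y → ∃ t, ρ t = y := by
    intro y hy
    have : y ∈ Set.range ρ := by rw [hρ]; exact hy
    exact this
  obtain ⟨inv, hinvρ⟩ : ∃ inv : ℝ → ℝ, ∀ y, 0 < y → ρ (inv y) = y :=
    ⟨fun y => if h : 0 < y then Classical.choose (hinv y h) else 0,
      fun y hy => by simp only [dif_pos hy]; exact Classical.choose_spec (hinv y hy)⟩
  refine ⟨fun k => if h : (k : ℕ) = 0 then v k
    else inv (v k - v ⟨(k : ℕ) - 1, by have := k.isLt; omega⟩), ?_⟩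
  set u : Fin n → ℝ := fun k => if h : (k : ℕ) = 0 then v k
    else inv (v k - v ⟨(k : ℕ) - 1, by have := k.isLt; omega⟩) with hu_def
  have key : ∀ m (h : m < n), ordT ρ u ⟨m, h⟩ = v ⟨m, h⟩ := by
    intro m
    induction m with
    | zero =>
      intro h
      unfold ordT
      have : Finset.univ.filter (fun j : Fin n => 0 < (j : ℕ) ∧ (j : ℕ) ≤ ((⟨0,h⟩ : Fin n) : ℕ)) = ∅ := by
        apply Finset.filter_false_of_mem
        intro j _
        simp only
        omega
      rw [this, Finset.sum_empty, add_zero]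
      simp [hu_def]
    | succ m ih =>
      intro h
      have hm : m < n := by omega
      have hins : Finset.univ.filter (fun j : Fin n => 0 < (j : ℕ) ∧ (j : ℕ) ≤ ((⟨m+1,h⟩ : Fin n) : ℕ))
          = insert (⟨m+1, h⟩ : Fin n)
            (Finset.univ.filter (fun j : Fin n => 0 < (j : ℕ) ∧ (j : ℕ) ≤ ((⟨m,hm⟩ : Fin n) : ℕ))) := by
        ext j
        simp only [Finset.mem_filter, Finset.mem_univ, true_and, Finset.mem_insert, Fin.ext_iff]
        omega
      have hnotmem : (⟨m+1, h⟩ : Fin n) ∉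
          Finset.univ.filter (fun j : Fin n => 0 < (j : ℕ) ∧ (j : ℕ) ≤ ((⟨m,hm⟩ : Fin n) : ℕ)) := by
        simp only [Finset.mem_filter, Finset.mem_univ, true_and, not_and]
        intro _; omega
      have hord : ordT ρ u ⟨m+1, h⟩ = ordT ρ u ⟨m, hm⟩ + ρ (u ⟨m+1, h⟩) := by
        unfold ordT
        rw [hins, Finset.sum_insert hnotmem]
        ring
      have hvlt : v ⟨m, hm⟩ < v ⟨m+1, h⟩ := hv (Fin.mk_lt_mk.2 (by omega))
      have hρu : ρ (u ⟨m+1, h⟩) = v ⟨m+1, h⟩ - v ⟨m, hm⟩ := by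
        simp only [hu_def, dif_neg (Nat.succ_ne_zero m), Nat.add_sub_cancel]
        exact hinvρ _ (by linarith)
      rw [hord, ih hm, hρu]
      ring
  funext k
  obtain ⟨m, h⟩ := k
  exact key m h

/-- the image of the CL link over strictly increasing vectors
equals Δ_{K-1}^∅; consequently, the CL model with learner class
{ρ[g] : g : ℝ^d → ℝ^{K−1}} for ρ with range (0,∞) has the same
representation ability as the SL model with the unrestricted learner class,
namely the maps into Δ_{K-1}^∅. -/
theorem stmt16 (K d : ℕ) (hK : 3 ≤ K) (hd : 1 ≤ d)
    (ρ : ℝ → ℝ) (hρ : Set.range ρ = Set.Ioi (0 : ℝ)) :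
    ((fun v : Fin (K - 1) → ℝ => fun y : Fin K => Pcl v y) '' {v | StrictMono v}
      = {p : Fin K → ℝ | p ∈ simplex K ∧ ∀ k, p k ≠ 0})
    ∧ ({P : (Fin d → ℝ) → Fin K → ℝ |
          ∃ g : (Fin d → ℝ) → Fin (K - 1) → ℝ,
            ∀ x y, P x y = Pcl (ordT ρ (g x)) y}
        = {p : (Fin d → ℝ) → Fin K → ℝ |
            ∀ x, p x ∈ simplex K ∧ ∀ k, p x k ≠ 0}) := by
  have hρpos : ∀ t, 0 < ρ t := fun t => by
    have ht : ρ t ∈ Set.range ρ := ⟨t, rfl⟩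
    rw [hρ] at ht; exact ht
  constructor
  · ext p
    constructor
    · rintro ⟨v, hv, rfl⟩
      exact pcl_forward hK hv
    · rintro ⟨hp, hne⟩
      obtain ⟨v, hv, hvp⟩ := pcl_surj hK hp hne
      exact ⟨v, hv, hvp⟩
  · ext P
    simp only [Set.mem_setOf_eq]
    constructor
    · rintro ⟨g, hg⟩ x
      have hPx : P x = fun y => Pcl (ordT ρ (g x)) y := funext fun y => hg x y
      rw [hPx]
      exact pcl_forward hK (ordT_strictMono hρpos (g x))
    · intro hP
      have hex : ∀ x, ∃ u, (fun y => Pcl (ordT ρ u) y) = P x := by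
        intro x
        obtain ⟨v, hv, hvp⟩ := pcl_surj hK (hP x).1 (hP x).2
        obtain ⟨u, hu⟩ := ordT_surj hρ hv
        exact ⟨u, by rw [hu]; exact hvp⟩
      choose g hg using hex
      exact ⟨g, fun x y => by rw [← hg x]⟩
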